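/- arXiv:1812.04925 — 2 statements merged into one kernel-verified Lean document; each statement's English description precedes it below -/
import Mathlib

section
/- For every frequency λ there exist: a sequence (s_n) of positive integers, coefficients (a_m) ⊂ ℂ, a strictly increasing sequence of indices (N_K), and a real number x > 0, such that, denoting by η the strictly increasing enumeration of the set {λ_n + (j/s_n)(λ_{n+1} − λ_n) : n ≥ 1, j = 0, 1, …, s_n − 1} (which is again a frequency), the partial sums P_K(s) = ∑_{m=1}^{N_K} a_m e^{−η_m s} form a uniformly Cauchy sequence on the half-plane {s : Re s > 0}, while the series ∑_m a_m e^{−η_m x} does not converge. (Consequently the normed space D∞(η) of η-Dirichlet series converging and bounded on the right half-plane is not complete.) -/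
open Filter Finset Complex MeasureTheory Topology

/-- Partial sum `S_N(s) = ∑_{n=1}^N a_n e^{−λ_n s}` of a general Dirichlet series. -/
noncomputable def partialSum (lam : ℕ → ℝ) (a : ℕ → ℂ) (N : ℕ) (s : ℂ) : ℂ :=
  ∑ n ∈ Finset.Icc 1 N, a n * Complex.exp (-(lam n : ℂ) * s)

/-- A frequency: strictly increasing (indexed from 1), nonnegative, tending to infinity. -/
def IsFrequency (lam : ℕ → ℝ) : Prop :=
  (∀ n : ℕ, 1 ≤ n → lam n < lam (n + 1)) ∧ 0 ≤ lam 1 ∧ Tendsto lam atTop atTop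

/-- `(a_n)` belongs to `D∞^ext(λ)` with extension `f` and bound `M`. -/
def MemDExt (lam : ℕ → ℝ) (a : ℕ → ℂ) (f : ℂ → ℂ) (M : ℝ) : Prop :=
  (∃ σ₀ : ℝ,
    (∀ s : ℂ, σ₀ < s.re →
      ∃ L : ℂ, Tendsto (fun N => partialSum lam a N s) atTop (nhds L)) ∧
    (∀ s : ℂ, max σ₀ 0 < s.re →
      Tendsto (fun N => partialSum lam a N s) atTop (nhds (f s)))) ∧
  DifferentiableOn ℂ f {s : ℂ | 0 < s.re} ∧
  (∀ s : ℂ, 0 < s.re → ‖f s‖ ≤ M)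

section NederAux
open Real

lemma dirichlet_kernel_id (t : ℝ) (j : ℕ) :
    2 * Real.sin (t/2) * ∑ k ∈ Finset.Icc 1 j, Real.sin (k * t)
      = Real.cos (t/2) - Real.cos ((2*j+1) * (t/2)) := by
  induction j with
  | zero => simp
  | succ j ih =>
    rw [Finset.sum_Icc_succ_top (by omega), mul_add, ih]
    have h := Real.cos_sub_cos ((2*(j:ℝ)+1)*(t/2)) ((2*(j:ℝ)+3)*(t/2))
    have h2 : ((2*(j:ℝ)+1)*(t/2) + (2*(j:ℝ)+3)*(t/2))/2 = ((j:ℝ)+1)*t := by ring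
    have h3 : ((2*(j:ℝ)+1)*(t/2) - (2*(j:ℝ)+3)*(t/2))/2 = -(t/2) := by ring
    rw [h2, h3, Real.sin_neg] at h
    have h4 : (2*((j:ℕ):ℝ)+3)*(t/2) = (2*(((j+1):ℕ):ℝ)+1) * (t/2) := by push_cast; ring
    rw [h4] at h
    push_cast at h ⊢
    linarith

lemma dirichlet_bound {t : ℝ} (ht : 0 < t) (ht' : t ≤ π) (j : ℕ) :
    |∑ k ∈ Finset.Icc 1 j, Real.sin (k*t)| ≤ π / t := by
  have hπ := Real.pi_pos
  have hs : 0 < Real.sin (t/2) :=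
    Real.sin_pos_of_pos_of_lt_pi (by linarith) (by linarith)
  have hs2 : t / π ≤ Real.sin (t/2) := by
    have := Real.mul_le_sin (x := t/2) (by linarith) (by linarith)
    calc t/π = 2/π * (t/2) := by ring
    _ ≤ _ := this
  have hid := dirichlet_kernel_id t j
  have hb : |2 * Real.sin (t/2) * ∑ k ∈ Finset.Icc 1 j, Real.sin (k*t)| ≤ 2 := by
    rw [hid]
    have h1 := Real.abs_cos_le_one (t/2)
    have h2 := Real.abs_cos_le_one ((2*j+1) * (t/2))
    calc |Real.cos (t/2) - Real.cos ((2*j+1) * (t/2))|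
        ≤ |Real.cos (t/2)| + |Real.cos ((2*j+1) * (t/2))| := abs_sub _ _
      _ ≤ 2 := by linarith
  rw [abs_mul, abs_mul, _root_.abs_of_nonneg (by norm_num : (0:ℝ) ≤ 2), _root_.abs_of_pos hs] at hb
  have key : |∑ k ∈ Finset.Icc 1 j, Real.sin (k*t)| ≤ 1 / Real.sin (t/2) := by
    rw [le_div_iff₀ hs]; linarith
  calc |∑ k ∈ Finset.Icc 1 j, Real.sin (k*t)| ≤ 1 / Real.sin (t/2) := key
    _ ≤ 1 / (t/π) := by
        apply one_div_le_one_div_of_le (by positivity) hs2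
    _ = π / t := by field_simp


lemma telescope_inv (m r : ℕ) (h1 : 1 ≤ m) (hmr : m ≤ r) :
    ∑ k ∈ Finset.Ico m r, ((1:ℝ)/k - 1/(k+1)) = 1/m - 1/r := by
  induction r, hmr using Nat.le_induction with
  | base => simp
  | succ r hr ih =>
    rw [Finset.sum_Ico_succ_top hr, ih]
    push_cast
    ring

lemma abel_identity (E : ℕ → ℝ) (m r : ℕ) (h1 : 1 ≤ m) (hm : E m = 0) (hmr : m ≤ r) :
    ∑ k ∈ Finset.Ioc m r, (E k - E (k-1)) / k
      = E r / r + ∑ k ∈ Finset.Ico m r, E k * ((1:ℝ)/k - 1/(k+1)) := by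
  induction r, hmr using Nat.le_induction with
  | base => simp [hm]
  | succ r hr ih =>
    rw [Finset.sum_Ioc_succ_top hr, Finset.sum_Ico_succ_top hr, ih]
    have hr1 : 1 ≤ r := le_trans h1 hr
    have : ((r:ℝ)) ≠ 0 := by positivity
    have h2 : (r + 1 : ℕ) - 1 = r := by omega
    rw [h2]
    push_cast
    field_simp
    ring

lemma abel_bound (E : ℕ → ℝ) (m r : ℕ) (M : ℝ) (h1 : 1 ≤ m) (hm : E m = 0) (hmr : m ≤ r)
    (hE : ∀ k, m ≤ k → k ≤ r → |E k| ≤ M) :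
    |∑ k ∈ Finset.Ioc m r, (E k - E (k-1)) / k| ≤ M / m := by
  have hM : 0 ≤ M := le_trans (abs_nonneg _) (hE m le_rfl hmr)
  have hr1 : 1 ≤ r := le_trans h1 hmr
  rw [abel_identity E m r h1 hm hmr]
  have hb : |∑ k ∈ Finset.Ico m r, E k * ((1:ℝ)/k - 1/(k+1))|
      ≤ M * (1/m - 1/r) := by
    calc |∑ k ∈ Finset.Ico m r, E k * ((1:ℝ)/k - 1/(k+1))|
        ≤ ∑ k ∈ Finset.Ico m r, |E k * ((1:ℝ)/k - 1/(k+1))| :=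
          Finset.abs_sum_le_sum_abs _ _
      _ ≤ ∑ k ∈ Finset.Ico m r, M * ((1:ℝ)/k - 1/(k+1)) := by
          apply Finset.sum_le_sum
          intro k hk
          rw [Finset.mem_Ico] at hk
          have hk1 : (1:ℝ) ≤ k := by exact_mod_cast le_trans h1 hk.1
          have hpos : (0:ℝ) ≤ 1/(k:ℝ) - 1/(k+1) := by
            rw [sub_nonneg]
            apply one_div_le_one_div_of_le (by linarith) (by linarith)
          rw [abs_mul, _root_.abs_of_nonneg hpos]
          exact mul_le_mul_of_nonneg_right (hE k hk.1 (le_of_lt hk.2)) hpos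
      _ = M * (1/m - 1/r) := by rw [← Finset.mul_sum, telescope_inv m r h1 hmr]
  have hrpos : (0:ℝ) < r := by exact_mod_cast hr1
  have hmpos : (0:ℝ) < m := by exact_mod_cast h1
  have hEr : |E r / r| ≤ M / r := by
    rw [abs_div, _root_.abs_of_pos hrpos]
    gcongr
    exact hE r hmr le_rfl
  have hmr' : (1:ℝ)/r ≤ 1/m := by
    apply one_div_le_one_div_of_le hmpos
    exact_mod_cast hmr
  calc |E r / r + ∑ k ∈ Finset.Ico m r, E k * ((1:ℝ)/k - 1/(k+1))|
      ≤ |E r / r| + |∑ k ∈ Finset.Ico m r, E k * ((1:ℝ)/k - 1/(k+1))| := abs_add_le _ _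
    _ ≤ M / r + M * (1/m - 1/r) := add_le_add hEr hb
    _ = M / m := by field_simp; ring




lemma sin_sum_bound_pos {t : ℝ} (ht : 0 < t) (ht' : t ≤ π) (r : ℕ) :
    |∑ k ∈ Finset.Icc 1 r, Real.sin (k*t)/k| ≤ 5*π := by
  have hπ := Real.pi_pos
  have hπ3 := Real.pi_gt_three
  set m : ℕ := max 1 ⌊1/t⌋₊ with hmdef
  have hm1 : 1 ≤ m := le_max_left _ _
  have hmpos : (0:ℝ) < m := by exact_mod_cast hm1
  have hmt : (m:ℝ)*t ≤ π := by
    rcases le_or_gt t 1 with h|h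
    · have h1 : (1:ℝ) ≤ 1/t := by rw [le_div_iff₀ ht]; linarith
      have h2 : 1 ≤ ⌊1/t⌋₊ := Nat.le_floor (by exact_mod_cast h1)
      have h3 : m = ⌊1/t⌋₊ := by omega
      have h4 : (m:ℝ) ≤ 1/t := h3 ▸ Nat.floor_le (by positivity)
      calc (m:ℝ)*t ≤ (1/t)*t := by apply mul_le_mul_of_nonneg_right h4 (le_of_lt ht)
        _ = 1 := by field_simp
        _ ≤ π := by linarith
    · have h2 : ⌊1/t⌋₊ = 0 := Nat.floor_eq_zero.mpr (by rw [div_lt_one ht]; linarith)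
      have h3 : m = 1 := by omega
      rw [h3]; push_cast; linarith
  have h2tm : 1 < 2*((m:ℝ)*t) := by
    have hup : 1/t < (m:ℝ) + 1 := by
      calc (1:ℝ)/t < ⌊1/t⌋₊ + 1 := Nat.lt_floor_add_one _
        _ ≤ m + 1 := by
          have : (⌊1/t⌋₊:ℝ) ≤ m := by exact_mod_cast le_max_right 1 ⌊1/t⌋₊
          linarith
    have h1 : 1 < t*((m:ℝ)+1) := by
      rw [div_lt_iff₀ ht] at hup; linarith
    have h2 : t ≤ t*(m:ℝ) := le_mul_of_one_le_right (le_of_lt ht) (by exact_mod_cast hm1)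
    nlinarith
  have part1 : ∀ q : ℕ, q ≤ m → |∑ k ∈ Finset.Icc 1 q, Real.sin (k*t)/k| ≤ π := by
    intro q hq
    calc |∑ k ∈ Finset.Icc 1 q, Real.sin (k*t)/k|
        ≤ ∑ k ∈ Finset.Icc 1 q, |Real.sin (k*t)/k| := Finset.abs_sum_le_sum_abs _ _
      _ ≤ ∑ k ∈ Finset.Icc 1 q, t := by
          apply Finset.sum_le_sum
          intro k hk
          rw [Finset.mem_Icc] at hk
          have hk1 : (1:ℝ) ≤ k := by exact_mod_cast hk.1
          have : |Real.sin (k*t)| ≤ k*t := by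
            have h5 := Real.abs_sin_le_abs (x := (k:ℝ)*t)
            have h6 : |(k:ℝ)*t| = (k:ℝ)*t := _root_.abs_of_nonneg (by positivity)
            rw [h6] at h5
            exact h5
          rw [abs_div, _root_.abs_of_nonneg (by positivity : (0:ℝ) ≤ (k:ℝ))]
          rw [div_le_iff₀ (by linarith)]
          calc |Real.sin (k*t)| ≤ k*t := this
            _ = t*k := by ring
      _ = q * t := by rw [Finset.sum_const, Nat.card_Icc]; simp [nsmul_eq_mul]
      _ ≤ m * t := by
          apply mul_le_mul_of_nonneg_right _ (le_of_lt ht)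
          exact_mod_cast hq
      _ ≤ π := hmt
  rcases le_or_gt r m with hrm|hrm
  · exact (part1 r hrm).trans (by linarith)
  · have hsplit : (∑ k ∈ Finset.Ioc 0 m, Real.sin (k*t)/k)
        + (∑ k ∈ Finset.Ioc m r, Real.sin (k*t)/k)
        = ∑ k ∈ Finset.Ioc 0 r, Real.sin (k*t)/k :=
      Finset.sum_Ioc_consecutive _ (Nat.zero_le m) (le_of_lt hrm)
    have hIcc : ∀ q : ℕ, Finset.Icc 1 q = Finset.Ioc 0 q := fun q => by
      rw [← Finset.Icc_add_one_left_eq_Ioc, zero_add]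
    set D : ℕ → ℝ := fun j => ∑ k ∈ Finset.Icc 1 j, Real.sin (k*t) with hD
    set E : ℕ → ℝ := fun j => D j - D m with hE
    have hEm : E m = 0 := by simp [hE]
    have hEb : ∀ k, m ≤ k → k ≤ r → |E k| ≤ 2*(π/t) := by
      intro k _ _
      calc |E k| ≤ |D k| + |D m| := abs_sub _ _
        _ ≤ π/t + π/t := add_le_add (dirichlet_bound ht ht' k) (dirichlet_bound ht ht' m)
        _ = 2*(π/t) := by ring
    have hterm : ∀ k ∈ Finset.Ioc m r, Real.sin (k*t)/k = (E k - E (k-1))/k := by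
      intro k hk
      rw [Finset.mem_Ioc] at hk
      have hk1 : 1 ≤ k := le_trans hm1 (le_of_lt hk.1)
      congr 1
      have : E k - E (k-1) = D k - D (k-1) := by simp only [hE]; ring
      rw [this, hD]
      have hk2 : k - 1 + 1 = k := by omega
      simp only
      rw [← hk2, Finset.sum_Icc_succ_top (by omega)]
      push_cast [hk2]
      ring
    have h2 : |∑ k ∈ Finset.Ioc m r, Real.sin (k*t)/k| ≤ 4*π := by
      rw [Finset.sum_congr rfl hterm]
      have := abel_bound E m r (2*(π/t)) hm1 hEm (le_of_lt hrm) hEb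
      have heq : 2*(π/t)/m = 2*π/(t*m) := by field_simp
      calc |∑ k ∈ Finset.Ioc m r, (E k - E (k-1))/k| ≤ 2*(π/t)/m := this
        _ = 2*π/(t*m) := heq
        _ ≤ 4*π := by
            rw [div_le_iff₀ (by positivity)]
            nlinarith
    calc |∑ k ∈ Finset.Icc 1 r, Real.sin (k*t)/k|
        = |(∑ k ∈ Finset.Ioc 0 m, Real.sin (k*t)/k)
            + (∑ k ∈ Finset.Ioc m r, Real.sin (k*t)/k)| := by rw [hsplit, hIcc]
      _ ≤ |∑ k ∈ Finset.Ioc 0 m, Real.sin (k*t)/k|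
            + |∑ k ∈ Finset.Ioc m r, Real.sin (k*t)/k| := abs_add_le _ _
      _ ≤ π + 4*π := by
          apply add_le_add _ h2
          rw [← hIcc]; exact part1 m le_rfl
      _ = 5*π := by ring

lemma sin_sum_bound (r : ℕ) (θ : ℝ) : |∑ k ∈ Finset.Icc 1 r, Real.sin (k*θ)/k| ≤ 5*π := by
  have hπ := Real.pi_pos
  set n : ℤ := round (θ / (2*π)) with hn
  set t : ℝ := θ - n*(2*π) with htdef
  have hteq : ∀ k : ℕ, Real.sin (k*θ) = Real.sin (k*t) := by
    intro k
    have h : (k:ℝ)*θ = k*t + ((k*n : ℤ):ℝ)*(2*π) := by push_cast; ring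
    rw [h, Real.sin_add_int_mul_two_pi]
  have ht : |t| ≤ π := by
    have h := abs_sub_round (θ/(2*π))
    have h2π : (0:ℝ) < 2*π := by linarith
    have heq : t = (θ/(2*π) - n) * (2*π) := by rw [htdef]; field_simp
    rw [heq, abs_mul, _root_.abs_of_pos h2π]
    nlinarith
  simp only [hteq]
  rcases lt_trichotomy t 0 with h|h|h
  · have hb := sin_sum_bound_pos (t := -t) (by linarith)
      (by rw [abs_le] at ht; linarith) r
    have : ∑ k ∈ Finset.Icc 1 r, Real.sin (k*t)/k
        = -∑ k ∈ Finset.Icc 1 r, Real.sin (k*(-t))/k := by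
      rw [← Finset.sum_neg_distrib]
      apply Finset.sum_congr rfl
      intro k _
      rw [mul_neg, Real.sin_neg]
      ring
    rw [this, abs_neg]
    exact hb
  · simp [h]
    positivity
  · exact sin_sum_bound_pos h (by rw [abs_le] at ht; exact ht.2) r



noncomputable def fejer (r : ℕ) (w : ℂ) : ℂ :=
  ∑ k ∈ Finset.Icc 1 r, (w^(r-k) - w^(r+k)) / k

lemma fejer_circle (r : ℕ) (w : ℂ) (hw : ‖w‖ = 1) :
    ‖fejer r w‖ ≤ 10*π := by
  set θ : ℝ := w.arg with hθ
  have hwe : w = Complex.exp (θ*I) := by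
    have := Complex.norm_mul_exp_arg_mul_I w
    rw [hw] at this
    simpa using this.symm
  have hterm : ∀ k ∈ Finset.Icc 1 r, (w^(r-k) - w^(r+k)) / k
      = Complex.exp (r*(θ*I)) * (-2*I) * ((Real.sin (k*θ)/k : ℝ) : ℂ) := by
    intro k hk
    rw [Finset.mem_Icc] at hk
    have hcast : ((r-k : ℕ) : ℂ) = (r:ℂ) - k := Nat.cast_sub hk.2
    rw [hwe, ← Complex.exp_nat_mul, ← Complex.exp_nat_mul, hcast]
    push_cast
    have h1 : ((r:ℂ) - k) * (θ*I) = (r:ℂ)*(θ*I) + (-(k*θ))*I := by ring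
    have h2 : ((r:ℂ) + k) * (θ*I) = (r:ℂ)*(θ*I) + ((k*θ))*I := by ring
    rw [h1, h2, Complex.exp_add, Complex.exp_add,
      Complex.exp_mul_I, Complex.exp_mul_I, Complex.cos_neg, Complex.sin_neg]
    have hk0 : (k:ℂ) ≠ 0 := by
      exact_mod_cast Nat.cast_ne_zero.mpr (by omega)
    field_simp
    ring
  rw [fejer, Finset.sum_congr rfl hterm, ← Finset.mul_sum]
  have hsum : ∑ k ∈ Finset.Icc 1 r, ((Real.sin (k*θ)/k : ℝ) : ℂ)
      = ((∑ k ∈ Finset.Icc 1 r, Real.sin (k*θ)/k : ℝ) : ℂ) := by push_cast; rfl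
  rw [hsum, norm_mul, norm_mul]
  have h3 : ‖Complex.exp (r*(θ*I))‖ = 1 := by
    rw [Complex.norm_exp]
    have : ((r:ℂ)*(θ*I)).re = 0 := by simp
    rw [this, Real.exp_zero]
  have h4 : ‖-2*I‖ = 2 := by simp
  rw [h3, h4, Complex.norm_real, Real.norm_eq_abs, one_mul]
  have := sin_sum_bound r θ
  linarith

lemma fejer_disk (r : ℕ) (w : ℂ) (hw : ‖w‖ ≤ 1) :
    ‖fejer r w‖ ≤ 10*π := by
  have hd : Differentiable ℂ (fejer r) := by
    unfold fejer
    apply Differentiable.fun_sum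
    intro k _
    exact ((differentiable_pow _).sub (differentiable_pow _)).div_const _
  have key := Complex.norm_le_of_forall_mem_frontier_norm_le (U := Metric.ball (0:ℂ) 1)
    Metric.isBounded_ball hd.diffContOnCl (C := 10*π) ?_ (z := w) ?_
  · exact key
  · intro z hz
    rw [frontier_ball (0:ℂ) one_ne_zero] at hz
    rw [mem_sphere_iff_norm, sub_zero] at hz
    exact fejer_circle r z hz
  · rw [closure_ball (0:ℂ) one_ne_zero, Metric.mem_closedBall, dist_zero_right]
    exact hw


def sF (r : ℕ → ℕ) (n : ℕ) : ℕ := 2 * r n + 1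
def BF (r : ℕ → ℕ) (n : ℕ) : ℕ := 1 + ∑ i ∈ Finset.Ico 1 n, sF r i
def idxF (r : ℕ → ℕ) (m : ℕ) : ℕ := Nat.findGreatest (fun n => BF r n ≤ m) m
noncomputable def cF (q j : ℕ) : ℝ :=
  if j < q then 1/((q - j : ℕ) : ℝ) else if q < j then -(1/((j - q : ℕ) : ℝ)) else 0
noncomputable def betaF (n : ℕ) : ℝ := (1/2)^n / (10*Real.pi)
noncomputable def etaF (lam : ℕ → ℝ) (r : ℕ → ℕ) (m : ℕ) : ℝ :=
  lam (idxF r m) + ((m - BF r (idxF r m) : ℕ) : ℝ) / (sF r (idxF r m))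
    * (lam (idxF r m + 1) - lam (idxF r m))
noncomputable def aF (r : ℕ → ℕ) (m : ℕ) : ℂ :=
  ((betaF (idxF r m) * cF (r (idxF r m)) (m - BF r (idxF r m)) : ℝ) : ℂ)

lemma sF_pos (r : ℕ → ℕ) (n : ℕ) : 1 ≤ sF r n := by simp [sF]

lemma BF_one (r : ℕ → ℕ) : BF r 1 = 1 := by simp [BF]

lemma BF_succ (r : ℕ → ℕ) {n : ℕ} (hn : 1 ≤ n) : BF r (n+1) = BF r n + sF r n := by
  rw [BF, BF, Finset.sum_Ico_succ_top hn]
  ring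

lemma BF_ge (r : ℕ → ℕ) (n : ℕ) : n ≤ BF r n := by
  rw [BF]
  calc n ≤ 1 + (n - 1) := by omega
    _ ≤ 1 + ∑ i ∈ Finset.Ico 1 n, sF r i := by
        apply Nat.add_le_add_left
        calc n - 1 = ∑ i ∈ Finset.Ico 1 n, 1 := by
              rw [Finset.sum_const, Nat.card_Ico, smul_eq_mul, mul_one]
          _ ≤ _ := Finset.sum_le_sum (fun i _ => sF_pos r i)

lemma BF_pos (r : ℕ → ℕ) (n : ℕ) : 1 ≤ BF r n := by rw [BF]; omega

lemma BF_mono (r : ℕ → ℕ) : Monotone (BF r) := by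
  intro a b hab
  rw [BF, BF]
  apply Nat.add_le_add_left
  apply Finset.sum_le_sum_of_subset
  exact Finset.Ico_subset_Ico le_rfl hab

lemma BF_strict (r : ℕ → ℕ) {n : ℕ} (hn : 1 ≤ n) : BF r n < BF r (n+1) := by
  rw [BF_succ r hn]
  have := sF_pos r n
  omega

lemma idxF_le (r : ℕ → ℕ) (m : ℕ) : idxF r m ≤ m := Nat.findGreatest_le m

lemma idxF_spec (r : ℕ → ℕ) {m : ℕ} (hm : 1 ≤ m) :
    1 ≤ idxF r m ∧ BF r (idxF r m) ≤ m ∧ m < BF r (idxF r m + 1) := by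
  have h1 : 1 ≤ idxF r m := Nat.le_findGreatest hm (show BF r 1 ≤ m by rw [BF_one]; exact hm)
  have h2 : BF r (idxF r m) ≤ m := by
    exact Nat.findGreatest_spec (P := fun n => BF r n ≤ m) hm
      (show BF r 1 ≤ m by rw [BF_one]; exact hm)
  refine ⟨h1, h2, ?_⟩
  rcases le_or_gt (idxF r m + 1) m with h|h
  · by_contra hcon
    push_neg at hcon
    exact Nat.findGreatest_is_greatest (Nat.lt_succ_self _) h hcon
  · have hidx : idxF r m = m := le_antisymm (idxF_le r m) (by omega)
    calc m < m + 1 := Nat.lt_succ_self m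
      _ ≤ BF r (m+1) := BF_ge r (m+1)
      _ = BF r (idxF r m + 1) := by rw [hidx]

lemma idxF_eq (r : ℕ → ℕ) {n j : ℕ} (hn : 1 ≤ n) (hj : j < sF r n) :
    idxF r (BF r n + j) = n := by
  set m := BF r n + j with hm
  have hnm : n ≤ m := le_trans (BF_ge r n) (by omega)
  have hP : BF r n ≤ m := by omega
  have h1 : n ≤ idxF r m := Nat.le_findGreatest hnm hP
  by_contra hne
  have h2 : n + 1 ≤ idxF r m := by omega
  have h3 : BF r (idxF r m) ≤ m :=
    Nat.findGreatest_spec (P := fun k => BF r k ≤ m) hnm hP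
  have h4 : BF r (n+1) ≤ BF r (idxF r m) := BF_mono r h2
  rw [BF_succ r hn] at h4
  omega


lemma fejer_expand (q : ℕ) (w : ℂ) :
    ∑ j ∈ Finset.range (2*q+1), ((cF q j : ℝ):ℂ) * w^j = fejer q w := by
  have hsplit : (2*q+1) = q + (q+1) := by omega
  rw [hsplit, Finset.sum_range_add]
  have h2 : ∑ i ∈ Finset.range (q+1), ((cF q (q+i) : ℝ):ℂ) * w^(q+i)
      = ((cF q q : ℝ):ℂ) * w^q
        + ∑ i ∈ Finset.range q, ((cF q (q+(i+1)) : ℝ):ℂ) * w^(q+(i+1)) := by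
    rw [Finset.sum_range_succ']
    simp only [Nat.add_zero]
    ring
  rw [h2]
  have hc0 : cF q q = 0 := by simp [cF]
  rw [hc0]
  simp only [Complex.ofReal_zero, zero_mul, zero_add]
  have hS1 : ∑ j ∈ Finset.range q, ((cF q j : ℝ):ℂ) * w^j
      = ∑ k ∈ Finset.Icc 1 q, w^(q-k) / (k:ℂ) := by
    apply Finset.sum_nbij' (i := fun j => q - j) (j := fun k => q - k)
    · intro j hj; rw [Finset.mem_range] at hj; rw [Finset.mem_Icc]; omega
    · intro k hk; rw [Finset.mem_Icc] at hk; rw [Finset.mem_range]; omega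
    · intro j hj; rw [Finset.mem_range] at hj; omega
    · intro k hk; rw [Finset.mem_Icc] at hk; omega
    · intro j hj
      rw [Finset.mem_range] at hj
      rw [cF, if_pos hj]
      have : q - (q - j) = j := by omega
      rw [this]
      push_cast
      ring
  have hS2 : ∑ i ∈ Finset.range q, ((cF q (q+(i+1)) : ℝ):ℂ) * w^(q+(i+1))
      = -∑ k ∈ Finset.Icc 1 q, w^(q+k) / (k:ℂ) := by
    rw [← Finset.sum_neg_distrib]
    apply Finset.sum_nbij' (i := fun i => i + 1) (j := fun k => k - 1)
    · intro i hi; rw [Finset.mem_range] at hi; rw [Finset.mem_Icc]; omega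
    · intro k hk; rw [Finset.mem_Icc] at hk; rw [Finset.mem_range]; omega
    · intro i _; omega
    · intro k hk; rw [Finset.mem_Icc] at hk; omega
    · intro i hi
      rw [Finset.mem_range] at hi
      rw [cF, if_neg (by omega), if_pos (by omega)]
      have : q + (i+1) - q = i + 1 := by omega
      rw [this]
      push_cast
      ring
  rw [hS1, hS2, fejer, ← sub_eq_add_neg, ← Finset.sum_sub_distrib]
  apply Finset.sum_congr rfl
  intro k _
  ring


lemma block_reindex {M : Type*} [AddCommMonoid M] (r : ℕ → ℕ) {n : ℕ} (hn : 1 ≤ n)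
    (g : ℕ → M) :
    ∑ m ∈ Finset.Ioc (BF r n - 1) (BF r (n+1) - 1), g m
      = ∑ j ∈ Finset.range (sF r n), g (BF r n + j) := by
  have h1 : BF r (n+1) = BF r n + sF r n := BF_succ r hn
  have h2 : 1 ≤ BF r n := BF_pos r n
  have h3 : Finset.Ioc (BF r n - 1) (BF r (n+1) - 1)
      = Finset.Ico (BF r n) (BF r n + sF r n) := by
    ext k; simp only [Finset.mem_Ioc, Finset.mem_Ico]; omega
  rw [h3, Finset.sum_Ico_eq_sum_range]
  have h4 : BF r n + sF r n - BF r n = sF r n := by omega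
  rw [h4]

lemma aF_eval (r : ℕ → ℕ) {n j : ℕ} (hn : 1 ≤ n) (hj : j < sF r n) :
    aF r (BF r n + j) = ((betaF n * cF (r n) j : ℝ) : ℂ) := by
  rw [aF, idxF_eq r hn hj, Nat.add_sub_cancel_left]

lemma etaF_eval (lam : ℕ → ℝ) (r : ℕ → ℕ) {n j : ℕ} (hn : 1 ≤ n) (hj : j < sF r n) :
    etaF lam r (BF r n + j)
      = lam n + (j : ℝ) / (sF r n) * (lam (n+1) - lam n) := by
  rw [etaF, idxF_eq r hn hj, Nat.add_sub_cancel_left]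

lemma block_value (lam : ℕ → ℝ) (r : ℕ → ℕ) {n : ℕ} (hn : 1 ≤ n) (s : ℂ) :
    ∑ j ∈ Finset.range (sF r n),
        aF r (BF r n + j) * Complex.exp (-((etaF lam r (BF r n + j) : ℝ) : ℂ) * s)
      = ((betaF n : ℝ):ℂ) * Complex.exp (-((lam n : ℝ):ℂ) * s)
          * fejer (r n) (Complex.exp (-((((lam (n+1) - lam n)/(sF r n)) : ℝ) : ℂ) * s)) := by
  set w : ℂ := Complex.exp (-((((lam (n+1) - lam n)/(sF r n)) : ℝ) : ℂ) * s) with hw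
  have hterm : ∀ j ∈ Finset.range (sF r n),
      aF r (BF r n + j) * Complex.exp (-((etaF lam r (BF r n + j) : ℝ) : ℂ) * s)
        = ((betaF n : ℝ):ℂ) * Complex.exp (-((lam n : ℝ):ℂ) * s)
          * (((cF (r n) j : ℝ):ℂ) * w^j) := by
    intro j hj
    rw [Finset.mem_range] at hj
    rw [aF_eval r hn hj, etaF_eval lam r hn hj]
    have hsne : ((sF r n : ℕ):ℂ) ≠ 0 := by
      exact_mod_cast Nat.cast_ne_zero.mpr (by have := hj; omega)
    have hexp : (-(((lam n + (j : ℝ) / (sF r n) * (lam (n+1) - lam n)) : ℝ) : ℂ) * s)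
        = -((lam n : ℝ):ℂ) * s + (j:ℂ) * (-((((lam (n+1) - lam n)/(sF r n)) : ℝ) : ℂ) * s) := by
      push_cast
      field_simp
      ring
    rw [hexp, Complex.exp_add, Complex.exp_nat_mul, ← hw]
    push_cast
    ring
  rw [Finset.sum_congr rfl hterm, ← Finset.mul_sum]
  have : sF r n = 2 * (r n) + 1 := rfl
  rw [this, fejer_expand (r n) w]

lemma block_bound (lam : ℕ → ℝ) (r : ℕ → ℕ) {n : ℕ} (hn : 1 ≤ n)
    (hlam : 0 ≤ lam n) (s : ℂ) (hs : 0 ≤ s.re) (hd : 0 ≤ lam (n+1) - lam n) :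
    ‖∑ j ∈ Finset.range (sF r n),
        aF r (BF r n + j) * Complex.exp (-((etaF lam r (BF r n + j) : ℝ) : ℂ) * s)‖
      ≤ (1/2)^n := by
  rw [block_value lam r hn s]
  rw [norm_mul, norm_mul]
  have hπ := Real.pi_pos
  have hβ : ‖((betaF n : ℝ):ℂ)‖ = betaF n := by
    rw [Complex.norm_real, Real.norm_eq_abs]
    apply _root_.abs_of_nonneg
    rw [betaF]
    positivity
  have h1 : ‖Complex.exp (-((lam n : ℝ):ℂ) * s)‖ ≤ 1 := by
    rw [Complex.norm_exp]
    rw [Real.exp_le_one_iff]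
    have : (-((lam n : ℝ):ℂ) * s).re = -(lam n * s.re) := by
      simp [Complex.mul_re]
    rw [this]
    simp only [neg_nonpos]
    positivity
  have h2 : ‖Complex.exp (-((((lam (n+1) - lam n)/(sF r n)) : ℝ) : ℂ) * s)‖ ≤ 1 := by
    rw [Complex.norm_exp, Real.exp_le_one_iff]
    have : (-((((lam (n+1) - lam n)/(sF r n)) : ℝ) : ℂ) * s).re
        = -((lam (n+1) - lam n)/(sF r n) * s.re) := by
      simp [Complex.mul_re]
    rw [this]
    simp only [neg_nonpos]
    positivity
  calc ‖((betaF n : ℝ):ℂ)‖ * ‖Complex.exp (-((lam n : ℝ):ℂ) * s)‖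
        * ‖fejer (r n) _‖
      ≤ betaF n * 1 * (10*π) := by
        rw [hβ]
        apply mul_le_mul (mul_le_mul le_rfl h1 (norm_nonneg _) (by rw [betaF]; positivity))
          (fejer_disk _ _ h2) (norm_nonneg _) (by rw [betaF]; positivity)
    _ = (1/2)^n := by
        rw [betaF]
        field_simp


lemma block_reindex' {M : Type*} [AddCommMonoid M] (r : ℕ → ℕ) {n : ℕ} (hn : 1 ≤ n)
    (q : ℕ) (g : ℕ → M) :
    ∑ m ∈ Finset.Ioc (BF r n - 1) (BF r n - 1 + q), g m
      = ∑ j ∈ Finset.range q, g (BF r n + j) := by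
  have h2 : 1 ≤ BF r n := BF_pos r n
  have h3 : Finset.Ioc (BF r n - 1) (BF r n - 1 + q)
      = Finset.Ico (BF r n) (BF r n + q) := by
    ext k; simp only [Finset.mem_Ioc, Finset.mem_Ico]; omega
  rw [h3, Finset.sum_Ico_eq_sum_range]
  have h4 : BF r n + q - BF r n = q := by omega
  rw [h4]

lemma partial_split (lam : ℕ → ℝ) (r : ℕ → ℕ) (s : ℂ) {u v : ℕ} (huv : u ≤ v) :
    partialSum (etaF lam r) (aF r) v s - partialSum (etaF lam r) (aF r) u s
      = ∑ m ∈ Finset.Ioc u v, aF r m * Complex.exp (-((etaF lam r m : ℝ) : ℂ) * s) := by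
  have hIoc : ∀ w : ℕ, Finset.Icc 1 w = Finset.Ioc 0 w := by
    intro w; ext k; simp only [Finset.mem_Icc, Finset.mem_Ioc]; omega
  rw [partialSum, partialSum, hIoc, hIoc,
    ← Finset.sum_Ioc_consecutive _ (Nat.zero_le u) huv]
  ring

lemma geom_tail (L K : ℕ) (hLK : L ≤ K) :
    ∑ n ∈ Finset.Ioc L K, ((1:ℝ)/2)^n ≤ (1/2)^L := by
  have : ∑ n ∈ Finset.Ioc L K, ((1:ℝ)/2)^n = (1/2)^L - (1/2)^K := by
    induction K, hLK using Nat.le_induction with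
    | base => simp
    | succ K hK ih =>
      rw [Finset.sum_Ioc_succ_top hK, ih]
      ring
  rw [this]
  have : (0:ℝ) < (1/2)^K := by positivity
  linarith


end NederAux

open Real in
/-- For every frequency `λ` there is an equidistant refinement `η` (as in Neder's
construction) for which `D∞(η)` is not complete: some sequence of η-Dirichlet
polynomials is uniformly Cauchy on the right half-plane while the corresponding
series diverges at some `x > 0`. -/
theorem exists_refinement_not_complete (lam : ℕ → ℝ) (hfreq : IsFrequency lam) :
    ∃ (sn : ℕ → ℕ) (a : ℕ → ℂ) (Nk : ℕ → ℕ) (x : ℝ) (eta : ℕ → ℝ),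
      (∀ n : ℕ, 1 ≤ sn n) ∧
      StrictMono Nk ∧
      0 < x ∧
      IsFrequency eta ∧
      ({y : ℝ | ∃ m : ℕ, 1 ≤ m ∧ eta m = y} =
        {y : ℝ | ∃ n : ℕ, 1 ≤ n ∧ ∃ j : ℕ, j < sn n ∧
          y = lam n + (j / sn n : ℝ) * (lam (n + 1) - lam n)}) ∧
      (∀ δ : ℝ, 0 < δ → ∃ K₀ : ℕ, ∀ K : ℕ, K₀ ≤ K → ∀ L : ℕ, K₀ ≤ L → ∀ s : ℂ,
        0 < s.re →
          ‖partialSum eta a (Nk K) s - partialSum eta a (Nk L) s‖ ≤ δ) ∧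
      ¬ (∃ L : ℂ, Tendsto (fun N => partialSum eta a N (x : ℂ)) atTop (nhds L)) := by
  obtain ⟨hmono, hpos1, htop⟩ := hfreq
  have hπ := Real.pi_pos
  -- monotonicity facts about lam
  have lam_mono : ∀ a b : ℕ, 1 ≤ a → a ≤ b → lam a ≤ lam b := by
    intro a b ha hab
    induction b, hab using Nat.le_induction with
    | base => exact le_refl _
    | succ b hb ih => exact le_trans ih (le_of_lt (hmono b (le_trans ha hb)))
  have lam_nonneg : ∀ n : ℕ, 1 ≤ n → 0 ≤ lam n := fun n hn =>
    le_trans hpos1 (lam_mono 1 n le_rfl hn)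
  have d_pos : ∀ n : ℕ, 1 ≤ n → 0 < lam (n+1) - lam n := fun n hn =>
    sub_pos.mpr (hmono n hn)
  -- choose r
  have hharm := Real.tendsto_sum_range_one_div_nat_succ_atTop
  have hex : ∀ n : ℕ, ∃ q : ℕ, 1 ≤ q ∧
      (10*π) * 2^n * Real.exp (lam (n+1)) ≤ ∑ i ∈ Finset.range q, (1/(i+1):ℝ) := by
    intro n
    obtain ⟨q, hq⟩ := ((hharm.eventually_ge_atTop ((10*π) * 2^n * Real.exp (lam (n+1)))).and
      (eventually_ge_atTop 1)).exists
    exact ⟨q, hq.2, hq.1⟩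
  choose r hr1 hr2 using hex
  refine ⟨sF r, aF r, fun K => BF r (K+1) - 1, 1, etaF lam r, sF_pos r, ?_, one_pos,
    ⟨?_, ?_, ?_⟩, ?_, ?_, ?_⟩
  · -- StrictMono Nk
    apply strictMono_nat_of_lt_succ
    intro K
    have h1 := BF_strict r (show 1 ≤ K+1 by omega)
    have h2 := BF_pos r (K+1)
    omega
  · -- etaF strictly increasing
    intro m hm
    obtain ⟨hi1, hi2, hi3⟩ := idxF_spec r hm
    have hBsucc : BF r (idxF r m + 1) = BF r (idxF r m) + sF r (idxF r m) := BF_succ r hi1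
    set n := idxF r m with hn
    set j := m - BF r n with hjdef
    have hmeq : m = BF r n + j := by omega
    have hjlt : j < sF r n := by omega
    have hdn := d_pos n hi1
    have hspos : (0:ℝ) < (sF r n : ℝ) := by exact_mod_cast sF_pos r n
    rcases lt_or_eq_of_le (Nat.succ_le_of_lt hjlt) with hlt | heq
    · have hm1 : BF r n + j + 1 = BF r n + (j+1) := by omega
      rw [hmeq, hm1, etaF_eval lam r hi1 hjlt, etaF_eval lam r hi1 hlt]
      have hstep : ((j+1:ℕ):ℝ) / (sF r n) * (lam (n+1) - lam n)
          - (j:ℝ) / (sF r n) * (lam (n+1) - lam n) = (lam (n+1) - lam n) / (sF r n) := by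
        push_cast
        field_simp
        ring
      have hq : 0 < (lam (n+1) - lam n) / (sF r n) := by positivity
      linarith
    · have hm1 : BF r n + j + 1 = BF r (n+1) + 0 := by omega
      rw [hmeq, hm1, etaF_eval lam r (show 1 ≤ n+1 by omega) (sF_pos r (n+1)),
        etaF_eval lam r hi1 hjlt]
      simp only [Nat.cast_zero, zero_div, zero_mul, add_zero]
      have hjs : (j:ℝ) < (sF r n : ℝ) := by exact_mod_cast hjlt
      have h1 : (j:ℝ) / (sF r n) * (lam (n+1) - lam n) < 1 * (lam (n+1) - lam n) := by
        apply mul_lt_mul_of_pos_right _ hdn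
        rw [div_lt_one hspos]
        exact hjs
      linarith
  · -- 0 ≤ etaF 1
    have h1 : idxF r 1 = 1 := Nat.findGreatest_eq (show BF r 1 ≤ 1 by rw [BF_one])
    rw [etaF, h1, BF_one]
    simp only [Nat.sub_self, Nat.cast_zero, zero_div, zero_mul, add_zero]
    exact hpos1
  · -- tendsto
    have hidx : Tendsto (idxF r) atTop atTop := by
      rw [tendsto_atTop_atTop]
      intro N
      refine ⟨BF r N, fun m hm => ?_⟩
      exact Nat.le_findGreatest (le_trans (BF_ge r N) hm) hm
    apply tendsto_atTop_mono' atTop ?_ (htop.comp hidx)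
    filter_upwards [eventually_ge_atTop 1] with m hm
    obtain ⟨hi1, hi2, hi3⟩ := idxF_spec r hm
    have hd := le_of_lt (d_pos _ hi1)
    have h0 : (0:ℝ) ≤ ((m - BF r (idxF r m):ℕ):ℝ) / (sF r (idxF r m))
        * (lam (idxF r m + 1) - lam (idxF r m)) := by positivity
    show lam (idxF r m) ≤ etaF lam r m
    rw [etaF]
    linarith
  · -- set equality
    ext y
    simp only [Set.mem_setOf_eq]
    constructor
    · rintro ⟨m, hm, rfl⟩
      obtain ⟨hi1, hi2, hi3⟩ := idxF_spec r hm
      have hBsucc : BF r (idxF r m + 1) = BF r (idxF r m) + sF r (idxF r m) := BF_succ r hi1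
      exact ⟨idxF r m, hi1, m - BF r (idxF r m), by omega, rfl⟩
    · rintro ⟨n, hn, j, hj, rfl⟩
      exact ⟨BF r n + j, by have := BF_pos r n; omega,
        by rw [etaF_eval lam r hn hj]⟩
  · -- uniform Cauchy
    intro δ hδ
    obtain ⟨K₀, hK₀⟩ := exists_pow_lt_of_lt_one hδ (show (1/2:ℝ) < 1 by norm_num)
    refine ⟨K₀, ?_⟩
    have key : ∀ K L : ℕ, K₀ ≤ L → L ≤ K → ∀ s : ℂ, 0 < s.re →
        ‖partialSum (etaF lam r) (aF r) (BF r (K+1) - 1) s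
          - partialSum (etaF lam r) (aF r) (BF r (L+1) - 1) s‖ ≤ δ := by
      intro K L hL hLK s hs
      have hmono' : BF r (L+1) - 1 ≤ BF r (K+1) - 1 := by
        have := BF_mono r (show L+1 ≤ K+1 by omega)
        omega
      rw [partial_split lam r s hmono']
      have hblocks : ∀ K' : ℕ, L ≤ K' →
          ∑ m ∈ Finset.Ioc (BF r (L+1) - 1) (BF r (K'+1) - 1),
              aF r m * Complex.exp (-((etaF lam r m : ℝ):ℂ) * s)
            = ∑ n ∈ Finset.Ioc L K', ∑ j ∈ Finset.range (sF r n),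
                aF r (BF r n + j) * Complex.exp (-((etaF lam r (BF r n + j) : ℝ):ℂ) * s) := by
        intro K' hK'
        induction K', hK' using Nat.le_induction with
        | base => simp
        | succ K' hK' ih =>
          have hm1 : BF r (L+1) - 1 ≤ BF r (K'+1) - 1 := by
            have := BF_mono r (show L+1 ≤ K'+1 by omega)
            omega
          have hm2 : BF r (K'+1) - 1 ≤ BF r (K'+2) - 1 := by
            have := BF_mono r (show K'+1 ≤ K'+2 by omega)
            omega
          rw [← Finset.sum_Ioc_consecutive _ hm1 hm2, ih, Finset.sum_Ioc_succ_top hK']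
          congr 1
          have hb2 : BF r (K'+2) - 1 = BF r (K'+1) - 1 + sF r (K'+1) := by
            have h1 : BF r (K'+2) = BF r (K'+1) + sF r (K'+1) := BF_succ r (by omega)
            have h2 := BF_pos r (K'+1)
            omega
          rw [hb2, block_reindex' r (show 1 ≤ K'+1 by omega)]
      rw [hblocks K hLK]
      calc ‖∑ n ∈ Finset.Ioc L K, ∑ j ∈ Finset.range (sF r n),
              aF r (BF r n + j) * Complex.exp (-((etaF lam r (BF r n + j) : ℝ):ℂ) * s)‖
          ≤ ∑ n ∈ Finset.Ioc L K, ‖∑ j ∈ Finset.range (sF r n),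
              aF r (BF r n + j) * Complex.exp (-((etaF lam r (BF r n + j) : ℝ):ℂ) * s)‖ := by
            exact norm_sum_le _ _
        _ ≤ ∑ n ∈ Finset.Ioc L K, ((1:ℝ)/2)^n := by
            apply Finset.sum_le_sum
            intro n hn
            rw [Finset.mem_Ioc] at hn
            have hn1 : 1 ≤ n := by omega
            exact block_bound lam r hn1 (lam_nonneg n hn1) s (le_of_lt hs)
              (le_of_lt (d_pos n hn1))
        _ ≤ (1/2)^L := geom_tail L K hLK
        _ ≤ (1/2)^K₀ := by
            apply pow_le_pow_of_le_one (by norm_num) (by norm_num) hL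
        _ ≤ δ := le_of_lt hK₀
    intro K hK L hL s hs
    rcases le_total L K with h|h
    · exact key K L hL h s hs
    · rw [norm_sub_rev]
      exact key L K hK h s hs
  · -- divergence
    rintro ⟨Lim, hLim⟩
    have hu : Tendsto (fun n : ℕ => BF r (n+1) - 1) atTop atTop := by
      rw [tendsto_atTop_atTop]
      intro b
      refine ⟨b, fun a ha => ?_⟩
      have := BF_ge r (a+1)
      omega
    have hv : Tendsto (fun n : ℕ => BF r (n+1) - 1 + r (n+1)) atTop atTop := by
      rw [tendsto_atTop_atTop]
      intro b
      refine ⟨b, fun a ha => ?_⟩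
      have := BF_ge r (a+1)
      omega
    have hPu := hLim.comp hu
    have hPv := hLim.comp hv
    have hdiff : Tendsto (fun n => partialSum (etaF lam r) (aF r) (BF r (n+1) - 1 + r (n+1)) ((1:ℝ):ℂ)
        - partialSum (etaF lam r) (aF r) (BF r (n+1) - 1) ((1:ℝ):ℂ)) atTop (𝓝 0) := by
      have := hPv.sub hPu
      simpa using this
    have hre : Tendsto (fun n => (partialSum (etaF lam r) (aF r) (BF r (n+1) - 1 + r (n+1)) ((1:ℝ):ℂ)
        - partialSum (etaF lam r) (aF r) (BF r (n+1) - 1) ((1:ℝ):ℂ)).re) atTop (𝓝 0) := by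
      have h2 := (Complex.continuous_re.tendsto 0).comp hdiff
      simpa [Function.comp_def] using h2
    have hone : ∀ n : ℕ, 1 ≤ (partialSum (etaF lam r) (aF r) (BF r (n+1) - 1 + r (n+1)) ((1:ℝ):ℂ)
        - partialSum (etaF lam r) (aF r) (BF r (n+1) - 1) ((1:ℝ):ℂ)).re := by
      intro n
      set N := n + 1 with hNdef
      have hN : 1 ≤ N := by omega
      rw [partial_split lam r ((1:ℝ):ℂ) (show BF r N - 1 ≤ BF r N - 1 + r N by omega),
        block_reindex' r hN (r N)]
      have hterm : ∀ j ∈ Finset.range (r N),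
          aF r (BF r N + j) * Complex.exp (-((etaF lam r (BF r N + j) : ℝ):ℂ) * ((1:ℝ):ℂ))
            = ((betaF N * cF (r N) j * Real.exp (-(etaF lam r (BF r N + j))) : ℝ) : ℂ) := by
        intro j hj
        rw [Finset.mem_range] at hj
        have hjs : j < sF r N := by rw [sF]; omega
        rw [aF_eval r hN hjs, Complex.ofReal_one, mul_one, ← Complex.ofReal_neg,
          ← Complex.ofReal_exp, ← Complex.ofReal_mul]
      rw [Finset.sum_congr rfl hterm, ← Complex.ofReal_sum, Complex.ofReal_re]
      -- real estimate
      have hβpos : 0 < betaF N := by rw [betaF]; positivity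
      have hηle : ∀ j : ℕ, j < r N → etaF lam r (BF r N + j) ≤ lam (N+1) := by
        intro j hj
        have hjs : j < sF r N := by rw [sF]; omega
        rw [etaF_eval lam r hN hjs]
        have hd := le_of_lt (d_pos N hN)
        have hjs' : (j:ℝ) / (sF r N) ≤ 1 := by
          rw [div_le_one (by exact_mod_cast sF_pos r N)]
          exact_mod_cast le_of_lt hjs
        nlinarith
      have hlow : ∀ j ∈ Finset.range (r N),
          betaF N * (1/((r N - j : ℕ):ℝ)) * Real.exp (-(lam (N+1)))
            ≤ betaF N * cF (r N) j * Real.exp (-(etaF lam r (BF r N + j))) := by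
        intro j hj
        rw [Finset.mem_range] at hj
        rw [cF, if_pos hj]
        have h1 : Real.exp (-(lam (N+1))) ≤ Real.exp (-(etaF lam r (BF r N + j))) :=
          Real.exp_le_exp.mpr (neg_le_neg (hηle j hj))
        have h2 : (0:ℝ) < ((r N - j : ℕ):ℝ) := by
          have : 1 ≤ r N - j := by omega
          exact_mod_cast this
        apply mul_le_mul_of_nonneg_left h1
        positivity
      have hharmsum : ∑ j ∈ Finset.range (r N), (1/((r N - j : ℕ):ℝ))
          = ∑ i ∈ Finset.range (r N), (1/(i+1):ℝ) := by
        rw [← Finset.sum_range_reflect (fun i => (1/((i+1):ℝ))) (r N)]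
        apply Finset.sum_congr rfl
        intro j hj
        rw [Finset.mem_range] at hj
        have : ((r N - j : ℕ):ℝ) = ((r N - 1 - j : ℕ):ℝ) + 1 := by
          have h3 : r N - j = (r N - 1 - j) + 1 := by omega
          rw [h3]; push_cast; ring
        rw [this]
      calc (1:ℝ) = betaF N * Real.exp (-(lam (N+1))) * ((10*π) * 2^N * Real.exp (lam (N+1))) := by
            rw [betaF, Real.exp_neg]
            have hez : Real.exp (lam (N+1)) ≠ 0 := Real.exp_ne_zero _
            field_simp
            rw [← mul_pow]; norm_num
        _ ≤ betaF N * Real.exp (-(lam (N+1))) * ∑ i ∈ Finset.range (r N), (1/(i+1):ℝ) := by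
            apply mul_le_mul_of_nonneg_left (hr2 N) (by positivity)
        _ = ∑ j ∈ Finset.range (r N), betaF N * (1/((r N - j : ℕ):ℝ)) * Real.exp (-(lam (N+1))) := by
            rw [← hharmsum, Finset.mul_sum]
            apply Finset.sum_congr rfl
            intro j _
            ring
        _ ≤ ∑ j ∈ Finset.range (r N), betaF N * cF (r N) j * Real.exp (-(etaF lam r (BF r N + j))) :=
            Finset.sum_le_sum hlow
    have hcon := ge_of_tendsto hre (Eventually.of_forall hone)
    linarith
end

section
/- The sequence λ given by λ_n = √(log n) for n ≥ 1 is a frequency that satisfies Landau's condition (LC) but has limsup_{n→∞} (log n)/λ_n = +∞ (so Bohr's condition (BC) fails for it). In particular, there exists a constant C > 0 such that √(log(n+1)) − √(log n) ≥ C · n^{−2} for all n ≥ 1, and indeed n²·(√(log(n+1)) − √(log n)) → +∞ as n → ∞. -/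
open Filter Finset Complex MeasureTheory Topology

/-- Landau's condition `(LC)`. -/
def LandauCondition (lam : ℕ → ℝ) : Prop :=
  ∀ δ : ℝ, 0 < δ → ∃ C : ℝ, 0 < C ∧ ∀ n : ℕ, 1 ≤ n →
    C * Real.exp (-Real.exp (δ * lam n)) ≤ lam (n + 1) - lam n

/-- Bohr's condition `(BC)`. -/
def BohrCondition (lam : ℕ → ℝ) : Prop :=
  ∃ l : ℝ, 0 < l ∧ ∀ δ : ℝ, 0 < δ → ∃ C : ℝ, 0 < C ∧ ∀ n : ℕ, 1 ≤ n →
    C * Real.exp (-(l + δ) * lam n) ≤ lam (n + 1) - lam n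

/- ### Auxiliary lemmas -/

lemma tendsto_sqrt_atTop' : Tendsto Real.sqrt atTop atTop :=
  tendsto_atTop_atTop.2 fun b => ⟨b ^ 2, fun _ ha => Real.le_sqrt_of_sq_le ha⟩

lemma lam_tendsto' : Tendsto (fun n : ℕ => Real.sqrt (Real.log n)) atTop atTop :=
  tendsto_sqrt_atTop'.comp (Real.tendsto_log_atTop.comp tendsto_natCast_atTop_atTop)

lemma log_succ_lb' (x : ℝ) (hx : 1 ≤ x) : 1 / (2 * x) ≤ Real.log (x + 1) - Real.log x := by
  have h0 : (0:ℝ) < x := by linarith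
  have h1 : Real.log (x / (x + 1)) ≤ x / (x + 1) - 1 :=
    Real.log_le_sub_one_of_pos (by positivity)
  have h2 : Real.log (x / (x + 1)) = Real.log x - Real.log (x + 1) :=
    Real.log_div (ne_of_gt h0) (by linarith)
  rw [h2] at h1
  have h3 : x / (x + 1) - 1 = -(1 / (x + 1)) := by field_simp; ring
  rw [h3] at h1
  have h5 : (1:ℝ) / (2 * x) ≤ 1 / (x + 1) :=
    one_div_le_one_div_of_le (by linarith) (by linarith)
  linarith

lemma log_succ_ub' (x : ℝ) (hx : 1 ≤ x) : Real.log (x + 1) - Real.log x ≤ 1 / x := by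
  have h0 : (0:ℝ) < x := by linarith
  have h1 : Real.log ((x + 1) / x) ≤ (x + 1) / x - 1 :=
    Real.log_le_sub_one_of_pos (by positivity)
  have h2 : Real.log ((x + 1) / x) = Real.log (x + 1) - Real.log x :=
    Real.log_div (by linarith) (ne_of_gt h0)
  have h3 : (x + 1) / x - 1 = 1 / x := by field_simp; ring
  linarith [h2 ▸ h1, h3.le]

lemma one_lt_log_three' {x : ℝ} (hx : 3 ≤ x) : 1 < Real.log x := by
  have h : Real.exp 1 < 3 := by
    have := Real.exp_one_lt_d9
    linarith
  calc 1 = Real.log (Real.exp 1) := (Real.log_exp 1).symm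
    _ < Real.log 3 := Real.log_lt_log (Real.exp_pos 1) h
    _ ≤ Real.log x := Real.log_le_log (by norm_num) hx

lemma gap_lb' (n : ℕ) (hn : 1 ≤ n) :
    (1/8 : ℝ) / (n:ℝ) ^ 2 ≤ Real.sqrt (Real.log (n + 1)) - Real.sqrt (Real.log n) := by
  have hx1 : (1:ℝ) ≤ (n:ℝ) := by exact_mod_cast hn
  set x : ℝ := (n : ℝ) with hxdef
  have hx0 : (0:ℝ) < x := by linarith
  have hlogx1 : 0 ≤ Real.log (x + 1) := Real.log_nonneg (by linarith)
  set s := Real.sqrt (Real.log x) with hsdef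
  have hbnn : 0 ≤ s := Real.sqrt_nonneg _
  have hs : s ≤ x := by
    have h : Real.log x ≤ x ^ 2 := by nlinarith [Real.log_le_sub_one_of_pos hx0]
    calc s ≤ Real.sqrt (x ^ 2) := Real.sqrt_le_sqrt h
      _ = x := Real.sqrt_sq hx0.le
  have hd := log_succ_lb' x hx1
  set u := 1 / x with hudef
  have hu0 : 0 < u := by positivity
  have hu1 : u ≤ 1 := by rw [hudef]; rw [div_le_one hx0]; linarith
  have hsu : s * u ≤ 1 := by
    calc s * u ≤ x * u := mul_le_mul_of_nonneg_right hs hu0.le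
      _ = 1 := by rw [hudef, mul_one_div, div_self hx0.ne']
  have h4 : s * u ^ 2 ≤ u := by
    have := mul_le_mul_of_nonneg_right hsu hu0.le
    calc s * u ^ 2 = s * u * u := by ring
      _ ≤ 1 * u := this
      _ = u := one_mul u
  have h5 : u ^ 4 ≤ u := by
    have h3 : u ^ 3 ≤ 1 := pow_le_one₀ hu0.le hu1
    calc u ^ 4 = u * u ^ 3 := by ring
      _ ≤ u * 1 := mul_le_mul_of_nonneg_left h3 hu0.le
      _ = u := mul_one u
  have hd' : u / 2 ≤ Real.log (x + 1) - Real.log x := by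
    have : u / 2 = 1 / (2 * x) := by rw [hudef]; ring
    linarith [this ▸ hd]
  have hkey : s + u ^ 2 / 8 ≤ Real.sqrt (Real.log (x + 1)) := by
    rw [Real.le_sqrt (by positivity) hlogx1]
    have hb2 : s ^ 2 = Real.log x := Real.sq_sqrt (Real.log_nonneg hx1)
    nlinarith [h4, h5, hd', hb2]
  have heq : (1/8 : ℝ) / x ^ 2 = u ^ 2 / 8 := by rw [hudef]; field_simp
  linarith [hkey, heq.le]

lemma gap_ub' (n : ℕ) (hn : 3 ≤ n) :
    Real.sqrt (Real.log (n + 1)) - Real.sqrt (Real.log n) ≤ 1 / (n:ℝ) := by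
  have hx3 : (3:ℝ) ≤ (n:ℝ) := by exact_mod_cast hn
  set x : ℝ := (n:ℝ)
  have hx1 : (1:ℝ) ≤ x := by linarith
  set a := Real.log (x + 1)
  set b := Real.log x
  have hb1 : 1 < b := one_lt_log_three' hx3
  have hab : b ≤ a := Real.log_le_log (by linarith) (by linarith)
  have hsb : 1 ≤ Real.sqrt b := by
    rw [show (1:ℝ) = Real.sqrt 1 by simp]
    exact Real.sqrt_le_sqrt hb1.le
  have hgap0 : 0 ≤ Real.sqrt a - Real.sqrt b := by
    have := Real.sqrt_le_sqrt hab; linarith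
  have hprod : (Real.sqrt a - Real.sqrt b) * (Real.sqrt a + Real.sqrt b) = a - b := by
    have ha2 : Real.sqrt a ^ 2 = a := Real.sq_sqrt (by linarith)
    have hb2 : Real.sqrt b ^ 2 = b := Real.sq_sqrt (by linarith)
    nlinarith [ha2, hb2]
  have hub : a - b ≤ 1 / x := log_succ_ub' x hx1
  nlinarith [hgap0, hsb, Real.sqrt_nonneg a, hprod, hub,
    mul_le_mul_of_nonneg_left hsb hgap0]

lemma arith_key' (x t g : ℝ) (hx : 2 ≤ x) (ht0 : 0 < t) (ht2 : t ^ 2 = x + 1)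
    (hg0 : 0 ≤ g) (h3 : 1 / (2 * x) ≤ g * (2 * t)) : t / 8 ≤ x ^ 2 * g := by
  have hx0 : (0:ℝ) < x := by linarith
  have hxx : 1 / (2 * x) * x = 1 / 2 := by field_simp
  have h5 : (1:ℝ)/2 ≤ 2 * (x * t * g) := by
    calc (1:ℝ)/2 = 1/(2*x)*x := hxx.symm
      _ ≤ g*(2*t)*x := mul_le_mul_of_nonneg_right h3 hx0.le
      _ = 2*(x*t*g) := by ring
  have h4 : 1 ≤ 4 * (x * t * g) := by linarith
  have h6 : t ≤ 4*x^2*g + 4*x*g := by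
    nlinarith [mul_le_mul_of_nonneg_right h4 ht0.le]
  nlinarith [h6, mul_nonneg (mul_nonneg (show (0:ℝ) ≤ x - 2 by linarith) hx0.le) hg0]

lemma gap_lb_strong' (n : ℕ) (hn : 2 ≤ n) :
    Real.sqrt ((n:ℝ) + 1) / 8 ≤
      (n:ℝ) ^ 2 * (Real.sqrt (Real.log ((n:ℝ) + 1)) - Real.sqrt (Real.log n)) := by
  have hx2 : (2:ℝ) ≤ (n:ℝ) := by exact_mod_cast hn
  have hx1 : (1:ℝ) ≤ (n:ℝ) := by linarith
  have hx0 : (0:ℝ) < (n:ℝ) := by linarith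
  have hb0 : 0 ≤ Real.log (n:ℝ) := Real.log_nonneg hx1
  have ha0 : 0 ≤ Real.log ((n:ℝ) + 1) := Real.log_nonneg (by linarith)
  have hab : Real.log (n:ℝ) ≤ Real.log ((n:ℝ) + 1) := Real.log_le_log hx0 (by linarith)
  have hsba : Real.sqrt (Real.log (n:ℝ)) ≤ Real.sqrt (Real.log ((n:ℝ) + 1)) :=
    Real.sqrt_le_sqrt hab
  have hg0 : 0 ≤ Real.sqrt (Real.log ((n:ℝ) + 1)) - Real.sqrt (Real.log (n:ℝ)) := by linarith
  have ht0 : 0 < Real.sqrt ((n:ℝ) + 1) := Real.sqrt_pos.2 (by linarith)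
  have ht2 : Real.sqrt ((n:ℝ) + 1) ^ 2 = (n:ℝ) + 1 := Real.sq_sqrt (by linarith)
  have hat : Real.sqrt (Real.log ((n:ℝ) + 1)) ≤ Real.sqrt ((n:ℝ) + 1) := by
    apply Real.sqrt_le_sqrt
    nlinarith [Real.log_le_sub_one_of_pos (show (0:ℝ) < (n:ℝ) + 1 by linarith)]
  -- (√a−√b)(√a+√b) = a − b  and  a − b ≥ 1/(2x)
  have hprod : (Real.sqrt (Real.log ((n:ℝ) + 1)) - Real.sqrt (Real.log (n:ℝ))) *
      (Real.sqrt (Real.log ((n:ℝ) + 1)) + Real.sqrt (Real.log (n:ℝ)))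
      = Real.log ((n:ℝ) + 1) - Real.log (n:ℝ) := by
    have ha2 := Real.sq_sqrt ha0
    have hb2 := Real.sq_sqrt hb0
    nlinarith [ha2, hb2]
  have hd := log_succ_lb' (n:ℝ) hx1
  have h3 : 1 / (2 * (n:ℝ)) ≤
      (Real.sqrt (Real.log ((n:ℝ) + 1)) - Real.sqrt (Real.log (n:ℝ))) *
        (2 * Real.sqrt ((n:ℝ) + 1)) := by
    have step1 : Real.log ((n:ℝ) + 1) - Real.log (n:ℝ) ≤
        (Real.sqrt (Real.log ((n:ℝ) + 1)) - Real.sqrt (Real.log (n:ℝ))) *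
          (2 * Real.sqrt (Real.log ((n:ℝ) + 1))) := by
      nlinarith [hprod, mul_le_mul_of_nonneg_left hsba hg0]
    have step2 : (Real.sqrt (Real.log ((n:ℝ) + 1)) - Real.sqrt (Real.log (n:ℝ))) *
        (2 * Real.sqrt (Real.log ((n:ℝ) + 1))) ≤
        (Real.sqrt (Real.log ((n:ℝ) + 1)) - Real.sqrt (Real.log (n:ℝ))) *
          (2 * Real.sqrt ((n:ℝ) + 1)) := by
      apply mul_le_mul_of_nonneg_left _ hg0
      linarith
    linarith [hd]
  exact arith_key' (n:ℝ) _ _ hx2 ht0 ht2 hg0 h3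

/-- Finite-adjustment lemma. -/
lemma adjust' (f g : ℕ → ℝ) (hf0 : ∀ n, 0 ≤ f n) (hf1 : ∀ n, f n ≤ 1)
    (hg : ∀ n, 1 ≤ n → 0 < g n) (h : ∀ᶠ n in atTop, f n ≤ g n) :
    ∃ C : ℝ, 0 < C ∧ ∀ n, 1 ≤ n → C * f n ≤ g n := by
  obtain ⟨N, hN⟩ := eventually_atTop.1 h
  have hne : (Finset.Icc 1 (N + 1)).Nonempty := ⟨1, by simp⟩
  set m := (Finset.Icc 1 (N + 1)).inf' hne g with hm
  have hmpos : 0 < m := by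
    rw [hm, Finset.lt_inf'_iff]
    intro i hi
    exact hg i (Finset.mem_Icc.1 hi).1
  refine ⟨min 1 m, lt_min one_pos hmpos, fun n hn => ?_⟩
  by_cases hcase : N ≤ n
  · calc min 1 m * f n ≤ 1 * f n :=
        mul_le_mul_of_nonneg_right (min_le_left _ _) (hf0 n)
      _ = f n := one_mul _
      _ ≤ g n := hN n hcase
  · have hmem : n ∈ Finset.Icc 1 (N + 1) := Finset.mem_Icc.2 ⟨hn, by omega⟩
    calc min 1 m * f n ≤ min 1 m * 1 :=
        mul_le_mul_of_nonneg_left (hf1 n) (le_min zero_le_one hmpos.le)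
      _ = min 1 m := mul_one _
      _ ≤ m := min_le_right _ _
      _ ≤ g n := Finset.inf'_le g hmem

/-- `λ_n = √(log n)` is a frequency satisfying `(LC)` with
`limsup (log n)/λ_n = +∞`, so `(BC)` fails for it. -/
theorem sqrt_log_satisfies_LC_not_BC :
    IsFrequency (fun n : ℕ => Real.sqrt (Real.log n)) ∧
    LandauCondition (fun n : ℕ => Real.sqrt (Real.log n)) ∧
    ¬ IsBoundedUnder (· ≤ ·) atTop
      (fun n : ℕ => Real.log n / Real.sqrt (Real.log n)) ∧
    ¬ BohrCondition (fun n : ℕ => Real.sqrt (Real.log n)) ∧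
    (∃ C : ℝ, 0 < C ∧ ∀ n : ℕ, 1 ≤ n →
      C / (n : ℝ) ^ 2 ≤ Real.sqrt (Real.log (n + 1)) - Real.sqrt (Real.log n)) ∧
    Tendsto (fun n : ℕ =>
        (n : ℝ) ^ 2 * (Real.sqrt (Real.log (n + 1)) - Real.sqrt (Real.log n)))
      atTop atTop := by
  have hcast : ∀ n : ℕ, ((n + 1 : ℕ) : ℝ) = (n : ℝ) + 1 := fun n => by push_cast; ring
  have hgap_lb : ∀ n : ℕ, 1 ≤ n → (1/8 : ℝ) / (n:ℝ) ^ 2 ≤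
      Real.sqrt (Real.log ((n + 1 : ℕ) : ℝ)) - Real.sqrt (Real.log n) := by
    intro n hn
    rw [hcast n]
    exact gap_lb' n hn
  have hgap_pos : ∀ n : ℕ, 1 ≤ n →
      0 < Real.sqrt (Real.log ((n + 1 : ℕ) : ℝ)) - Real.sqrt (Real.log n) := by
    intro n hn
    have := hgap_lb n hn
    have h8 : (0:ℝ) < (1/8 : ℝ) / (n:ℝ) ^ 2 := by
      have : (0:ℝ) < (n:ℝ) := by exact_mod_cast hn
      positivity
    linarith
  refine ⟨⟨?_, ?_, lam_tendsto'⟩, ?_, ?_, ?_, ?_, ?_⟩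
  · -- strictly increasing
    intro n hn
    have h := hgap_pos n hn
    dsimp only
    linarith
  · -- 0 ≤ λ 1
    exact Real.sqrt_nonneg _
  · -- Landau condition
    intro δ hδ
    set A : ℝ := 2 / δ ^ 2 + |Real.log 8| with hA
    have hev1 : ∀ᶠ x : ℝ in atTop, A ≤ Real.exp x / x ^ 2 :=
      (Real.tendsto_exp_div_pow_atTop 2).eventually_ge_atTop A
    have hev2 : ∀ᶠ x : ℝ in atTop, (1:ℝ) ≤ x := eventually_ge_atTop 1
    have hcomp : Tendsto (fun n : ℕ => δ * Real.sqrt (Real.log n)) atTop atTop :=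
      lam_tendsto'.const_mul_atTop hδ
    have hev3 : ∀ᶠ n : ℕ in atTop,
        A ≤ Real.exp (δ * Real.sqrt (Real.log n)) / (δ * Real.sqrt (Real.log n)) ^ 2 ∧
        (1:ℝ) ≤ δ * Real.sqrt (Real.log n) := hcomp.eventually (hev1.and hev2)
    have hev4 : ∀ᶠ n : ℕ in atTop,
        Real.exp (-Real.exp (δ * Real.sqrt (Real.log n))) ≤
          Real.sqrt (Real.log ((n + 1 : ℕ) : ℝ)) - Real.sqrt (Real.log n) := by
      filter_upwards [hev3, eventually_ge_atTop 1] with n hn3 hn1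
      obtain ⟨hA_le, ht1⟩ := hn3
      have hx1 : (1:ℝ) ≤ (n:ℝ) := by exact_mod_cast hn1
      have hlog0 : 0 ≤ Real.log (n:ℝ) := Real.log_nonneg hx1
      set t : ℝ := δ * Real.sqrt (Real.log n) with htdef
      have ht0 : 0 < t := lt_of_lt_of_le one_pos ht1
      have ht2 : t ^ 2 = δ ^ 2 * Real.log n := by
        rw [htdef, mul_pow, Real.sq_sqrt hlog0]
      have hexp : A * t ^ 2 ≤ Real.exp t := by
        rw [le_div_iff₀ (by positivity)] at hA_le
        linarith
      have ht21 : 1 ≤ t ^ 2 := by nlinarith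
      have hkey : 2 * Real.log n + Real.log 8 ≤ Real.exp t := by
        have h1 : A * t ^ 2 = 2 / δ ^ 2 * (δ ^ 2 * Real.log n) + |Real.log 8| * t ^ 2 := by
          rw [hA, ht2]; ring
        have h2 : 2 / δ ^ 2 * (δ ^ 2 * Real.log n) = 2 * Real.log n := by
          field_simp
        have h3 : Real.log 8 ≤ |Real.log 8| * t ^ 2 := by
          calc Real.log 8 ≤ |Real.log 8| := le_abs_self _
            _ = |Real.log 8| * 1 := (mul_one _).symm
            _ ≤ |Real.log 8| * t ^ 2 :=
              mul_le_mul_of_nonneg_left ht21 (abs_nonneg _)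
        linarith [hexp, h1 ▸ hexp]
      have hmono : Real.exp (-Real.exp t) ≤ Real.exp (-(2 * Real.log n + Real.log 8)) :=
        Real.exp_le_exp.2 (neg_le_neg hkey)
      have hval : Real.exp (-(2 * Real.log n + Real.log 8)) = (1/8 : ℝ) / (n:ℝ) ^ 2 := by
        have hn0 : (0:ℝ) < (n:ℝ) := by linarith
        rw [Real.exp_neg, show 2 * Real.log (n:ℝ) + Real.log 8 =
          (Real.log (n:ℝ) + Real.log (n:ℝ)) + Real.log 8 by ring,
          Real.exp_add, Real.exp_add, Real.exp_log hn0, Real.exp_log (by norm_num : (0:ℝ) < 8)]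
        field_simp
      calc Real.exp (-Real.exp t) ≤ (1/8 : ℝ) / (n:ℝ) ^ 2 := by rw [← hval]; exact hmono
        _ ≤ _ := hgap_lb n hn1
    obtain ⟨C, hC, hCle⟩ := adjust'
      (fun n => Real.exp (-Real.exp (δ * Real.sqrt (Real.log n))))
      (fun n => Real.sqrt (Real.log ((n + 1 : ℕ) : ℝ)) - Real.sqrt (Real.log n))
      (fun n => (Real.exp_pos _).le)
      (fun n => Real.exp_le_one_iff.2 (neg_nonpos.2 (Real.exp_pos _).le))
      hgap_pos hev4
    exact ⟨C, hC, fun n hn => hCle n hn⟩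
  · -- not bounded
    have heq : (fun n : ℕ => Real.log n / Real.sqrt (Real.log n)) =
        fun n : ℕ => Real.sqrt (Real.log n) := funext fun n => Real.div_sqrt
    rw [heq]
    exact not_isBoundedUnder_of_tendsto_atTop lam_tendsto'
  · -- not Bohr
    rintro ⟨l, hl0, hBC⟩
    obtain ⟨C, hC, hineq⟩ := hBC 1 one_pos
    set R : ℝ := (l + 1) + |Real.log C| + 1 with hR
    obtain ⟨n, hnR, hn3⟩ :=
      ((lam_tendsto'.eventually_ge_atTop R).and (eventually_ge_atTop 3)).exists
    have hx3 : (3:ℝ) ≤ (n:ℝ) := by exact_mod_cast hn3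
    have hn0 : (0:ℝ) < (n:ℝ) := by linarith
    set t : ℝ := Real.sqrt (Real.log n) with htdef
    have ht1 : 1 ≤ t := by
      have hR1 : (1:ℝ) ≤ R := by
        have := abs_nonneg (Real.log C); rw [hR]; linarith
      linarith [hnR]
    have hub : Real.sqrt (Real.log ((n + 1 : ℕ) : ℝ)) - Real.sqrt (Real.log n) ≤ 1 / (n:ℝ) := by
      rw [show ((n + 1 : ℕ) : ℝ) = (n:ℝ) + 1 by push_cast; ring]
      exact gap_ub' n hn3
    have hlow := hineq n (by omega)
    have hle : C * Real.exp (-(l + 1) * t) ≤ 1 / (n:ℝ) := le_trans hlow hub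
    have hone : Real.exp (-(l + 1) * t) * Real.exp ((l + 1) * t) = 1 := by
      rw [← Real.exp_add, show (-(l + 1) * t + (l + 1) * t : ℝ) = 0 by ring, Real.exp_zero]
    have hCn : C * (n:ℝ) ≤ Real.exp ((l + 1) * t) := by
      calc C * (n:ℝ)
          = C * Real.exp (-(l + 1) * t) * ((n:ℝ) * Real.exp ((l + 1) * t)) := by
            rw [show C * Real.exp (-(l + 1) * t) * ((n:ℝ) * Real.exp ((l + 1) * t))
              = C * (n:ℝ) * (Real.exp (-(l + 1) * t) * Real.exp ((l + 1) * t)) by ring,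
              hone, mul_one]
        _ ≤ 1 / (n:ℝ) * ((n:ℝ) * Real.exp ((l + 1) * t)) :=
            mul_le_mul_of_nonneg_right hle (by positivity)
        _ = Real.exp ((l + 1) * t) := by field_simp
    have hlogle : Real.log C + Real.log (n:ℝ) ≤ (l + 1) * t := by
      have h1 : Real.log (C * (n:ℝ)) ≤ (l + 1) * t := by
        rw [← Real.log_exp ((l + 1) * t)]
        exact Real.log_le_log (by positivity) hCn
      rwa [Real.log_mul hC.ne' hn0.ne'] at h1
    have hlogn : Real.log (n:ℝ) = t ^ 2 := (Real.sq_sqrt (Real.log_nonneg (by linarith))).symm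
    rw [hlogn] at hlogle
    -- contradiction: t² ≥ R t ≥ (l+1)t + |log C| + 1
    have hRt : R * t ≤ t * t := mul_le_mul_of_nonneg_right hnR (by linarith)
    have habs1 : |Real.log C| * 1 ≤ |Real.log C| * t :=
      mul_le_mul_of_nonneg_left ht1 (abs_nonneg _)
    have hneg : -|Real.log C| ≤ Real.log C := neg_abs_le _
    nlinarith [hRt, habs1, hneg, hlogle, ht1]
  · -- explicit constant
    exact ⟨1/8, by norm_num, fun n hn => gap_lb' n hn⟩
  · -- tendsto atTop
    have h1 : Tendsto (fun n : ℕ => (n:ℝ) + 1) atTop atTop :=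
      tendsto_atTop_add_const_right _ 1 tendsto_natCast_atTop_atTop
    have h2 : Tendsto (fun n : ℕ => Real.sqrt ((n:ℝ) + 1) / 8) atTop atTop :=
      (tendsto_sqrt_atTop'.comp h1).atTop_div_const (by norm_num)
    refine tendsto_atTop_mono' atTop ?_ h2
    filter_upwards [eventually_ge_atTop 2] with n hn
    exact gap_lb_strong' n hn
end
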